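/- Let H be the D × D matrix with entries H[u][v] = binom(T, T − K − v + u) for 0 ≤ u, v ≤ d = D−1 and a fixed integer K with D ≤ K ≤ T − D (all lower indices in range). Then det(H) = ∏_{j=0}^{d} binom(T+d, K+j) / binom(T+d, j). -/

import Mathlib

open Finset Polynomial

namespace BinomBlock

def Pf (t k : ℚ) (n u : ℕ) (x : ℚ) : ℚ :=
  (∏ i ∈ range u, (x + k - i)) * ∏ j ∈ range (n - u), (t - k + (u + 1 + j) - x)

lemma Pf_key (t k : ℚ) (n u : ℕ) (hu : u < n) (x : ℚ) :
    Pf t k n u x + Pf t k n (u + 1) x = (t + 1) * Pf (t + 1) k (n - 1) u x := by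
  have h1 : n - u = (n - 1 - u) + 1 := by omega
  have h2 : n - (u + 1) = n - 1 - u := by omega
  set m := n - 1 - u with hm
  set A := ∏ i ∈ range u, (x + k - i) with hA
  set B := ∏ j ∈ range m, (t - k + (u + 2 + j) - x) with hB
  have e1 : Pf t k n u x = A * (B * (t - k + (u + 1) - x)) := by
    rw [Pf, h1, prod_range_succ']
    congr 1
    congr 1
    · refine prod_congr rfl fun j _ => ?_
      push_cast; ring
    · norm_num
  have e2 : Pf t k n (u + 1) x = (A * (x + k - u)) * B := by
    rw [Pf, h2, prod_range_succ]
    congr 1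
    refine prod_congr rfl fun j _ => ?_
    push_cast; ring
  have e3 : Pf (t + 1) k (n - 1) u x = A * B := by
    rw [Pf, ← hm]
    congr 1
    refine prod_congr rfl fun j _ => ?_
    ring
  rw [e1, e2, e3]; ring

/-- Entry of the matrix after `k` reduction passes. -/
def Bent (T K d k u v : ℕ) : ℚ :=
  (∏ s ∈ range (min k (d - u)), ((T : ℚ) + 1 + s)) *
    Pf ((T + min k (d - u) : ℕ) : ℚ) (K : ℚ) (d - min k (d - u)) u (v : ℚ)

def Bm (T K d D k : ℕ) : Matrix (Fin D) (Fin D) ℚ :=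
  fun u v => Bent T K d k (u : ℕ) (v : ℕ)

/-- The elementary (unitriangular) matrix performing pass `k`. -/
def Em (d D k : ℕ) : Matrix (Fin D) (Fin D) ℚ :=
  fun u w => if (w : ℕ) = (u : ℕ) then 1
    else if (w : ℕ) = (u : ℕ) + 1 ∧ (u : ℕ) < d - k then 1 else 0

lemma Em_det (d D k : ℕ) : (Em d D k).det = 1 := by
  have h : (Em d D k).BlockTriangular id := by
    intro i j hij
    simp only [id] at hij
    have : (j : ℕ) < (i : ℕ) := hij
    simp only [Em]
    split_ifs with h1 h2
    · omega
    · omega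
    · rfl
  rw [Matrix.det_of_upperTriangular h]
  apply Finset.prod_eq_one
  intro i _
  simp [Em]

lemma Bm_step (T K d D k : ℕ) (hD : D = d + 1) (hk : k < d) :
    Em d D k * Bm T K d D k = Bm T K d D (k + 1) := by
  ext u v
  rw [Matrix.mul_apply]
  by_cases h : (u : ℕ) < d - k
  · have hu1 : (u : ℕ) + 1 < D := by omega
    set u' : Fin D := ⟨(u : ℕ) + 1, hu1⟩ with hu'
    have hval : (u' : ℕ) = (u : ℕ) + 1 := rfl
    have hne : u ≠ u' := by
      intro hc
      have := congrArg Fin.val hc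
      omega
    have hsum : ∀ w : Fin D, Em d D k u w * Bm T K d D k w v
        = (if w = u then Bm T K d D k u v else 0)
          + (if w = u' then Bm T K d D k u' v else 0) := by
      intro w
      by_cases h1 : w = u
      · have e0 : (w : ℕ) = (u : ℕ) := by rw [h1]
        have e3 : w ≠ u' := h1 ▸ hne
        simp [Em, e0, h1, e3, hne]
      · by_cases h2 : w = u'
        · have e0 : (w : ℕ) = (u : ℕ) + 1 := by rw [h2]
          have e1 : ¬ ((w : ℕ) = (u : ℕ)) := by omega
          simp [Em, e0, e1, h, h1, h2, Ne.symm hne, hval]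
        · have e1 : ¬ ((w : ℕ) = (u : ℕ)) := fun hc => h1 (Fin.ext hc)
          have e2 : ¬ ((w : ℕ) = (u : ℕ) + 1) := fun hc => h2 (Fin.ext hc)
          simp [Em, e1, e2, h1, h2]
    rw [Finset.sum_congr rfl fun w _ => hsum w, Finset.sum_add_distrib,
      Finset.sum_ite_eq' _ u, Finset.sum_ite_eq' _ u']
    simp only [Finset.mem_univ, if_true]
    -- now prove  B k u v + B k u' v = B (k+1) u v
    have m1 : min k (d - (u : ℕ)) = k := by omega
    have m2 : min k (d - ((u : ℕ) + 1)) = k := by omega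
    have m3 : min (k + 1) (d - (u : ℕ)) = k + 1 := by omega
    simp only [Bm, Bent, hu', m1, m2, m3]
    rw [prod_range_succ]
    have key := Pf_key ((T + k : ℕ) : ℚ) (K : ℚ) (d - k) (u : ℕ) (by omega) (v : ℚ)
    have c1 : ((T + k : ℕ) : ℚ) + 1 = ((T + (k + 1) : ℕ) : ℚ) := by push_cast; ring
    have c2 : d - k - 1 = d - (k + 1) := by omega
    rw [c1, c2] at key
    rw [mul_assoc]
    calc (∏ s ∈ range k, ((T:ℚ) + 1 + s)) * Pf ((T + k : ℕ) : ℚ) (K : ℚ) (d - k) (u : ℕ) (v : ℚ)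
        + (∏ s ∈ range k, ((T:ℚ) + 1 + s)) * Pf ((T + k : ℕ) : ℚ) (K : ℚ) (d - k) ((u : ℕ) + 1) (v : ℚ)
        = (∏ s ∈ range k, ((T:ℚ) + 1 + s)) *
          (Pf ((T + k : ℕ) : ℚ) (K : ℚ) (d - k) (u : ℕ) (v : ℚ)
            + Pf ((T + k : ℕ) : ℚ) (K : ℚ) (d - k) ((u : ℕ) + 1) (v : ℚ)) := by ring
      _ = (∏ s ∈ range k, ((T:ℚ) + 1 + s)) *
          (((T : ℚ) + 1 + k) * Pf ((T + (k + 1) : ℕ) : ℚ) (K : ℚ) (d - (k + 1)) (u : ℕ) (v : ℚ)) := by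
          rw [key]; push_cast; ring
  · have hall : ∀ w : Fin D, Em d D k u w * Bm T K d D k w v
        = (if w = u then Bm T K d D k u v else 0) := by
      intro w
      by_cases h1 : w = u
      · subst h1; simp [Em]
      · have e1 : ¬ ((w : ℕ) = (u : ℕ)) := fun hc => h1 (Fin.ext hc)
        simp [Em, e1, h1, h]
    rw [Finset.sum_congr rfl fun w _ => hall w, Finset.sum_ite_eq' _ u]
    simp only [Finset.mem_univ, if_true]
    have : min k (d - (u : ℕ)) = min (k + 1) (d - (u : ℕ)) := by omega
    simp only [Bm, Bent, this]

lemma Bm_det (T K d D : ℕ) (hD : D = d + 1) :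
    (Bm T K d D 0).det = (Bm T K d D d).det := by
  suffices h : ∀ k, k ≤ d → (Bm T K d D k).det = (Bm T K d D 0).det by
    exact (h d le_rfl).symm
  intro k
  induction k with
  | zero => intro _; rfl
  | succ k ih =>
    intro hk
    rw [← Bm_step T K d D k hD (by omega), Matrix.det_mul, Em_det, one_mul]
    exact ih (by omega)

lemma fact_ne (n : ℕ) : ((n.factorial : ℕ) : ℚ) ≠ 0 :=
  Nat.cast_ne_zero.mpr (Nat.factorial_ne_zero n)

lemma prod_asc (A : ℕ) : ∀ n : ℕ,
    ∏ j ∈ range n, ((A : ℚ) + 1 + j) = ((A + n).factorial : ℚ) / (A.factorial : ℚ)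
  | 0 => by simp [div_self (fact_ne A)]
  | n + 1 => by
    rw [prod_range_succ, prod_asc A n]
    have : (A + (n + 1)).factorial = (A + n + 1) * (A + n).factorial := by
      rw [show A + (n + 1) = (A + n) + 1 by ring, Nat.factorial_succ]
    rw [this]
    push_cast
    field_simp
    ring

lemma prod_desc (M : ℕ) : ∀ a : ℕ, a ≤ M →
    ∏ i ∈ range a, ((M : ℚ) - i) = (M.factorial : ℚ) / ((M - a).factorial : ℚ)
  | 0, _ => by simp [div_self (fact_ne M)]
  | a + 1, h => by
    have h1 : ((M - a).factorial : ℚ) = ((M : ℚ) - a) * ((M - (a + 1)).factorial : ℚ) := by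
      rw [show M - a = (M - (a + 1)) + 1 by omega, Nat.factorial_succ, Nat.cast_mul]
      congr 1
      rw [show M - (a + 1) + 1 = M - a by omega, Nat.cast_sub (by omega : a ≤ M)]
    rw [prod_range_succ, prod_desc M a (by omega), h1]
    have h3 : (M : ℚ) - a ≠ 0 := by
      rw [← Nat.cast_sub (by omega : a ≤ M)]
      exact Nat.cast_ne_zero.mpr (by omega)
    field_simp


/-- Entry factorization: the binomial entry equals `c(v) * P_u(v)`. -/
lemma entry (T d K : ℕ) (hK1 : d + 1 ≤ K) (hT : K + d + 1 ≤ T) (a b : ℕ)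
    (ha : a ≤ d) (hb : b ≤ d) :
    ((T.choose (T - K - b + a) : ℕ) : ℚ)
      = (T.factorial : ℚ) / (((K + b).factorial : ℚ) * ((T + d - (K + b)).factorial : ℚ))
        * Pf (T : ℚ) (K : ℚ) d a (b : ℚ) := by
  have hKbT : K + b ≤ T := by omega
  have h1 : T - K - b + a = T - (K + b - a) := by omega
  have h2 : K + b - a ≤ T := by omega
  rw [h1, Nat.choose_symm h2, Nat.cast_choose ℚ h2]
  rw [Pf]
  have e1 : ∏ i ∈ range a, ((b : ℚ) + K - i)
      = ((K + b).factorial : ℚ) / (((K + b) - a).factorial : ℚ) := by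
    rw [← prod_desc (K + b) a (by omega)]
    refine prod_congr rfl fun i _ => ?_
    push_cast; ring
  have e2 : ∏ j ∈ range (d - a), ((T : ℚ) - K + (a + 1 + j) - b)
      = ((T + d - (K + b)).factorial : ℚ) / ((T - (K + b) + a).factorial : ℚ) := by
    have hc : ((T - (K + b) + a : ℕ) : ℚ) = (T : ℚ) - (K + b) + a := by
      rw [Nat.cast_add, Nat.cast_sub hKbT]; push_cast; ring
    have := prod_asc (T - (K + b) + a) (d - a)
    have hsum : T - (K + b) + a + (d - a) = T + d - (K + b) := by omega
    rw [hsum] at this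
    rw [← this]
    refine prod_congr rfl fun j _ => ?_
    rw [hc]; ring
  rw [e1, e2]
  have h3 : T - (K + b - a) = T - (K + b) + a := by omega
  rw [h3]
  field_simp

/-- Final diagonal-family matrix entry computation and vandermonde. -/
lemma det_fall (K d D : ℕ) (hD : D = d + 1) :
    (Matrix.of fun u v : Fin D => ∏ i ∈ range (u : ℕ), ((v : ℚ) + K - i)).det
      = (Nat.superFactorial d : ℚ) := by
  subst hD
  set p : Fin (d + 1) → ℚ[X] :=
    fun j => ∏ i ∈ range (j : ℕ), (Polynomial.X + Polynomial.C ((K : ℚ) - i)) with hp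
  have h_monic : ∀ j, (p j).Monic := fun j =>
    monic_prod_of_monic _ _ fun i _ => monic_X_add_C _
  have h_deg : ∀ j, (p j).natDegree = (j : ℕ) := by
    intro j
    rw [hp]
    rw [Polynomial.natDegree_prod_of_monic _ _ fun i _ => monic_X_add_C _]
    have hs : ∀ i ∈ range (j : ℕ), (Polynomial.X + Polynomial.C ((K : ℚ) - i)).natDegree = 1 :=
      fun i _ => Polynomial.natDegree_X_add_C _
    rw [Finset.sum_congr rfl hs, Finset.sum_const, Finset.card_range, smul_eq_mul, mul_one]
  have key := Matrix.det_eval_matrixOfPolynomials_eq_det_vandermonde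
    (fun i : Fin (d + 1) => (i : ℚ)) p h_deg h_monic
  have heq : (Matrix.of fun u v : Fin (d + 1) => ∏ i ∈ range (u : ℕ), ((v : ℚ) + K - i))
      = (Matrix.of fun i j : Fin (d + 1) => (p j).eval ((i : ℕ) : ℚ)).transpose := by
    ext u v
    simp only [Matrix.of_apply, Matrix.transpose_apply, hp, Polynomial.eval_prod]
    refine prod_congr rfl fun i _ => ?_
    simp [Polynomial.eval_add]
    ring
  rw [heq, Matrix.det_transpose, ← key, Matrix.det_vandermonde_id_eq_superFactorial]

end BinomBlock

open Finset BinomBlock in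
/-- Block determinant: det(binom(T, T - K - v + u))_{0 ≤ u,v ≤ d}
= ∏_{j=0}^d binom(T+d, K+j) / binom(T+d, j), for D ≤ K ≤ T - D, D = d+1. -/
theorem binomial_block_det (T d D K : ℕ) (hD : D = d + 1)
    (hK1 : D ≤ K) (hK2 : K ≤ T - D) :
    Matrix.det (fun u v : Fin D =>
        ((T.choose (T - K - (v : ℕ) + (u : ℕ)) : ℕ) : ℚ))
    = ∏ j ∈ Finset.range (d + 1),
        (((T + d).choose (K + j) : ℕ) : ℚ) / (((T + d).choose j : ℕ) : ℚ) := by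
  have hK1' : d + 1 ≤ K := by omega
  have hT : K + d + 1 ≤ T := by omega
  -- Step 1: factor each entry as c(v) * P_u(v)
  have step1 : Matrix.det (fun u v : Fin D =>
        ((T.choose (T - K - (v : ℕ) + (u : ℕ)) : ℕ) : ℚ))
      = (∏ v : Fin D, (T.factorial : ℚ) /
            (((K + (v : ℕ)).factorial : ℚ) * ((T + d - (K + (v : ℕ))).factorial : ℚ)))
        * Matrix.det (fun u v : Fin D => Pf (T : ℚ) (K : ℚ) d (u : ℕ) ((v : ℕ) : ℚ)) := by
    rw [← Matrix.det_mul_row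
      (fun v : Fin D => (T.factorial : ℚ) /
        (((K + (v : ℕ)).factorial : ℚ) * ((T + d - (K + (v : ℕ))).factorial : ℚ)))
      (fun u v : Fin D => Pf (T : ℚ) (K : ℚ) d (u : ℕ) ((v : ℕ) : ℚ))]
    congr 1
    funext u v
    exact entry T d K hK1' hT (u : ℕ) (v : ℕ)
      (by have := u.isLt; omega) (by have := v.isLt; omega)
  rw [step1]
  -- Step 2: the P-matrix is Bm at pass 0
  have hB0 : (fun u v : Fin D => Pf (T : ℚ) (K : ℚ) d (u : ℕ) ((v : ℕ) : ℚ))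
      = Bm T K d D 0 := by
    funext u v
    simp [Bm, Bent]
  rw [hB0, Bm_det T K d D hD]
  -- Step 3: evaluate the final matrix
  have step3 : (Bm T K d D d).det
      = (∏ u : Fin D, ∏ s ∈ range (d - (u : ℕ)), ((T : ℚ) + 1 + s))
        * (Nat.superFactorial d : ℚ) := by
    have hBd : Bm T K d D d
        = Matrix.of (fun u v : Fin D =>
            (fun u : Fin D => ∏ s ∈ range (d - (u : ℕ)), ((T : ℚ) + 1 + s)) u
            * (fun u v : Fin D => ∏ i ∈ range (u : ℕ), (((v : ℕ) : ℚ) + K - i)) u v) := by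
      funext u v
      have hu : (u : ℕ) ≤ d := by have := u.isLt; omega
      have m1 : min d (d - (u : ℕ)) = d - (u : ℕ) := by omega
      have m2 : d - (d - (u : ℕ)) = (u : ℕ) := by omega
      simp only [Bm, Bent, m1, m2, Matrix.of_apply]
      congr 1
      rw [Pf, Nat.sub_self]
      simp
    rw [hBd]
    refine (Matrix.det_mul_column _ _).trans ?_
    rw [← det_fall K d D hD]
    rfl
  rw [step3]
  -- Step 4: scalar arithmetic
  subst hD
  rw [Fin.prod_univ_eq_prod_range
    (fun v : ℕ => (T.factorial : ℚ) /
      (((K + v).factorial : ℚ) * ((T + d - (K + v)).factorial : ℚ))) (d + 1)]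
  rw [Fin.prod_univ_eq_prod_range
    (fun u : ℕ => ∏ s ∈ range (d - u), ((T : ℚ) + 1 + s)) (d + 1)]
  have hsf : ((Nat.superFactorial d : ℕ) : ℚ) = ∏ x ∈ range (d + 1), ((x.factorial : ℕ) : ℚ) := by
    rw [← Nat.prod_range_succ_factorial d, Nat.cast_prod]
  rw [hsf, ← prod_mul_distrib, ← prod_mul_distrib]
  refine prod_congr rfl fun j hj => ?_
  have hjd : j ≤ d := by simp at hj; omega
  rw [prod_asc T (d - j), show T + (d - j) = T + d - j by omega]
  rw [Nat.cast_choose ℚ (show K + j ≤ T + d by omega),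
    Nat.cast_choose ℚ (show j ≤ T + d by omega)]
  have n1 := fact_ne (K + j)
  have n2 := fact_ne (T + d - (K + j))
  have n3 := fact_ne T
  have n4 := fact_ne j
  have n5 := fact_ne (T + d - j)
  have n6 := fact_ne (T + d)
  field_simp
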